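/- On the path graph P_n, define the odd greedy step of a configuration D as MD where M = {(i,i+1) : i odd, D(i) > D(i+1)}, and the even greedy step as M'D where M' = {(i,i+1) : i even, D(i) > D(i+1)}. Suppose C_k is obtained from some configuration by an odd greedy step and C_{k+1} is the even greedy step of C_k (or symmetrically, C_k is obtained by an even greedy step and C_{k+1} is the odd greedy step of C_k). Then for every token t with Φ_{C_k}(t) > 0, one has Φ_{C_{k+1}}(t) ≤ Φ_{C_k}(t) − 1. -/

import Mathlib

/-- `φ⁻(t, Q)` for the prefix `Q = [1, j]`: the number of vertices `i' ≤ j` whose token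
must cross `t`, i.e. with `C(i') > t`. -/
def phiM (n : ℕ) (C : Fin n → Fin n) (t j : Fin n) : ℕ :=
  (Finset.univ.filter fun i' : Fin n => i' ≤ j ∧ t < C i').card

/-- `ψ⁻(t, Q)` for the prefix `Q = [1, j]` and position `i` of `t`: the number of vertices
`i'` with `j < i' < i` whose token need not cross `t`, i.e. with `C(i') < t`. -/
def psiM (n : ℕ) (C : Fin n → Fin n) (t i j : Fin n) : ℕ :=
  (Finset.univ.filter fun i' : Fin n => j < i' ∧ i' < i ∧ C i' < t).card

/-- The prefixes for token `t` at position `i`: endpoints `j < i` such that some vertex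
`i' ≤ j` carries a token with `C(i') > t`. -/
def prefixSet (n : ℕ) (C : Fin n → Fin n) (t i : Fin n) : Finset (Fin n) :=
  Finset.univ.filter fun j : Fin n => j < i ∧ ∃ i' ≤ j, t < C i'

/-- `Φ⁻_C(t)` (with `i` the position of `t`): the maximum of `φ⁻ + ψ⁻` over all prefixes,
or `0` if no prefix exists. -/
def PhiM (n : ℕ) (C : Fin n → Fin n) (t i : Fin n) : ℕ :=
  (prefixSet n C t i).sup fun j => phiM n C t j + psiM n C t i j

/-- `φ⁺(t, Q)` for the suffix `Q = [j, n]`. -/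
def phiP (n : ℕ) (C : Fin n → Fin n) (t j : Fin n) : ℕ :=
  (Finset.univ.filter fun i' : Fin n => j ≤ i' ∧ C i' < t).card

/-- `ψ⁺(t, Q)` for the suffix `Q = [j, n]` and position `i` of `t`. -/
def psiP (n : ℕ) (C : Fin n → Fin n) (t i j : Fin n) : ℕ :=
  (Finset.univ.filter fun i' : Fin n => i < i' ∧ i' < j ∧ t < C i').card

/-- The suffixes for token `t` at position `i`: startpoints `j > i` such that some vertex
`i' ≥ j` carries a token with `C(i') < t`. -/
def suffixSet (n : ℕ) (C : Fin n → Fin n) (t i : Fin n) : Finset (Fin n) :=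
  Finset.univ.filter fun j : Fin n => i < j ∧ ∃ i', j ≤ i' ∧ C i' < t

/-- `Φ⁺_C(t)` (with `i` the position of `t`): the maximum of `φ⁺ + ψ⁺` over all suffixes,
or `0` if no suffix exists. -/
def PhiP (n : ℕ) (C : Fin n → Fin n) (t i : Fin n) : ℕ :=
  (suffixSet n C t i).sup fun j => phiP n C t j + psiP n C t i j

/-- The potential `Φ_C(t) = Φ⁻_C(t) + Φ⁺_C(t)` of token `t` at position `i = C⁻¹(t)`. -/
def Phi (n : ℕ) (C : Fin n → Fin n) (t i : Fin n) : ℕ :=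
  PhiM n C t i + PhiP n C t i

/-- The greedy step with parity `p ∈ {0, 1}` on the path `P_n` (0-indexed): simultaneously
swap the tokens on every edge `(v, v+1)` with `v ≡ p (mod 2)` whose tokens are out of
order (`D v > D (v+1)`).  With 1-indexed vertices as in the paper, `p = 0` is the *odd*
greedy step and `p = 1` is the *even* greedy step. -/
def greedyStep (n p : ℕ) (D : Fin n → Fin n) : Fin n → Fin n := fun v =>
  if v.val % 2 = p then
    if h : v.val + 1 < n then
      if D ⟨v.val + 1, h⟩ < D v then D ⟨v.val + 1, h⟩ else D v
    else D v
  else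
    if 1 ≤ v.val then
      if D v < D ⟨v.val - 1, lt_of_le_of_lt (Nat.sub_le _ _) v.isLt⟩ then
        D ⟨v.val - 1, lt_of_le_of_lt (Nat.sub_le _ _) v.isLt⟩
      else D v
    else D v

/-- The matching involution realizing a greedy step. -/
def stepMatch (n q : ℕ) (B : Fin n → Fin n) : Fin n → Fin n := fun v =>
  if v.val % 2 = q then
    if h : v.val + 1 < n then
      if B ⟨v.val + 1, h⟩ < B v then ⟨v.val + 1, h⟩ else v
    else v
  else
    if 1 ≤ v.val then
      if B v < B ⟨v.val - 1, lt_of_le_of_lt (Nat.sub_le _ _) v.isLt⟩ then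
        ⟨v.val - 1, lt_of_le_of_lt (Nat.sub_le _ _) v.isLt⟩
      else v
    else v

lemma greedyStep_eq_comp (n q : ℕ) (B : Fin n → Fin n) (v : Fin n) :
    greedyStep n q B v = B (stepMatch n q B v) := by
  unfold greedyStep stepMatch
  split_ifs <;> rfl

lemma stepMatch_invol (n q : ℕ) (hq : q < 2) (B : Fin n → Fin n) (v : Fin n) :
    stepMatch n q B (stepMatch n q B v) = v := by
  by_cases h1 : v.val % 2 = q
  · by_cases h2 : v.val + 1 < n
    · by_cases h3 : B ⟨v.val + 1, h2⟩ < B v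
      · have e1 : stepMatch n q B v = ⟨v.val + 1, h2⟩ := by
          unfold stepMatch; simp [h1, h2, h3]
        rw [e1]
        have h4 : ¬ ((v.val + 1) % 2 = q) := by omega
        unfold stepMatch
        simp only [h4, if_false]
        have h5 : 1 ≤ v.val + 1 := by omega
        have e2 : (⟨v.val + 1, h2⟩ : Fin n).val - 1 = v.val := by simp
        simp only [h5, if_true]
        have e3 : (⟨(⟨v.val + 1, h2⟩ : Fin n).val - 1,
            lt_of_le_of_lt (Nat.sub_le _ _) (Fin.isLt _)⟩ : Fin n) = v := by
          apply Fin.ext; simp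
        rw [e3]
        simp [h3]
      · have e1 : stepMatch n q B v = v := by unfold stepMatch; simp [h1, h2, h3]
        rw [e1]; unfold stepMatch; simp [h1, h2, h3]
    · have e1 : stepMatch n q B v = v := by unfold stepMatch; simp [h1, h2]
      rw [e1]; unfold stepMatch; simp [h1, h2]
  · by_cases h2 : 1 ≤ v.val
    · set u : Fin n := ⟨v.val - 1, lt_of_le_of_lt (Nat.sub_le _ _) v.isLt⟩ with hu
      by_cases h3 : B v < B u
      · have e1 : stepMatch n q B v = u := by
          unfold stepMatch; rw [if_neg h1, if_pos h2]; exact if_pos h3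
        rw [e1]
        have h4 : u.val % 2 = q := by
          have := v.isLt
          simp only [hu]
          omega
        have h5 : u.val + 1 < n := by have := v.isLt; simp only [hu]; omega
        have e2 : (⟨u.val + 1, h5⟩ : Fin n) = v := by apply Fin.ext; simp [hu]; omega
        unfold stepMatch
        simp only [h4, if_true, h5, dif_pos]
        rw [e2]
        simp [h3]
      · have e1 : stepMatch n q B v = v := by
          unfold stepMatch; rw [if_neg h1, if_pos h2]; exact if_neg h3
        rw [e1]; exact e1
    · have e1 : stepMatch n q B v = v := by unfold stepMatch; simp [h1, h2]
      rw [e1]; unfold stepMatch; simp [h1, h2]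

lemma stepMatch_cases (n q : ℕ) (B : Fin n → Fin n) (v : Fin n) :
    (stepMatch n q B v).val = v.val ∨
    ((stepMatch n q B v).val = v.val + 1 ∧ B (stepMatch n q B v) < B v) ∨
    (v.val = (stepMatch n q B v).val + 1 ∧ B v < B (stepMatch n q B v)) := by
  unfold stepMatch
  split_ifs with h1 h2 h3 h4 h5 <;>
    first
      | (left; rfl)
      | (right; left; exact ⟨rfl, h3⟩)
      | (right; right; refine ⟨by simp; omega, h5⟩)

lemma stepMatch_swap (n q : ℕ) (B : Fin n → Fin n) (v : ℕ) (h : v + 1 < n)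
    (hv : v % 2 = q) (hlt : B ⟨v + 1, h⟩ < B ⟨v, by omega⟩) :
    (stepMatch n q B ⟨v, by omega⟩).val = v + 1 := by
  unfold stepMatch
  simp [hv, h, hlt]

lemma stepMatch_injective (n q : ℕ) (hq : q < 2) (B : Fin n → Fin n) :
    Function.Injective (stepMatch n q B) :=
  Function.LeftInverse.injective (g := stepMatch n q B) (stepMatch_invol n q hq B)

lemma greedyStep_injective (n q : ℕ) (hq : q < 2) (B : Fin n → Fin n)
    (hB : Function.Injective B) : Function.Injective (greedyStep n q B) := by
  have : greedyStep n q B = B ∘ stepMatch n q B := funext (greedyStep_eq_comp n q B)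
  rw [this]
  exact hB.comp (stepMatch_injective n q hq B)

lemma greedyStep_sorted (n p : ℕ) (hp : p < 2) (D : Fin n → Fin n)
    (hD : Function.Injective D) (v : ℕ) (h : v + 1 < n) (hv : v % 2 = p) :
    greedyStep n p D ⟨v, by omega⟩ < greedyStep n p D ⟨v + 1, h⟩ := by
  have h2 : ¬ ((v + 1) % 2 = p) := by omega
  have e1 : greedyStep n p D ⟨v, by omega⟩ =
      if D ⟨v + 1, h⟩ < D ⟨v, by omega⟩ then D ⟨v + 1, h⟩ else D ⟨v, by omega⟩ := by
    unfold greedyStep; simp [hv, h]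
  have e2 : greedyStep n p D ⟨v + 1, h⟩ =
      if D ⟨v + 1, h⟩ < D ⟨v, by omega⟩ then D ⟨v, by omega⟩ else D ⟨v + 1, h⟩ := by
    unfold greedyStep
    simp only [h2, if_false]
    have h5 : 1 ≤ v + 1 := by omega
    have e3 : (⟨(⟨v + 1, h⟩ : Fin n).val - 1,
        lt_of_le_of_lt (Nat.sub_le _ _) (Fin.isLt _)⟩ : Fin n) = ⟨v, by omega⟩ := by
      apply Fin.ext; simp
    simp only [h5, if_true]
    rw [e3]
  have hne : D ⟨v, by omega⟩ ≠ D ⟨v + 1, h⟩ := by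
    intro he
    have h6 := congrArg Fin.val (hD he)
    simp at h6
  rw [e1, e2]
  by_cases h3 : D ⟨v + 1, h⟩ < D ⟨v, by omega⟩
  · simp [h3]
  · simp only [h3, if_false]
    exact lt_of_le_of_ne (not_lt.mp h3) hne

section helpers
variable {α : Type*} [DecidableEq α] (f : α → α) (s t : Finset α)

lemma cardH1 (hinj : Function.Injective f) (hmap : ∀ x ∈ s, f x ∈ t) :
    s.card ≤ t.card :=
  Finset.card_le_card_of_injOn f hmap (hinj.injOn)

lemma cardH2 (hinj : Function.Injective f) (hmap : ∀ x ∈ s, f x ∈ t)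
    (y : α) (hy : y ∈ t) (hne : ∀ x ∈ s, f x ≠ y) : s.card + 1 ≤ t.card := by
  have h1 : (s.image f).card = s.card := Finset.card_image_of_injOn hinj.injOn
  have h2 : s.image f ⊂ t := by
    rw [Finset.ssubset_iff_of_subset]
    · exact ⟨y, hy, by simp; intro x hx he; exact hne x hx he⟩
    · intro z hz
      rcases Finset.mem_image.mp hz with ⟨x, hx, rfl⟩
      exact hmap x hx
  have := Finset.card_lt_card h2
  omega

lemma cardH4 (hinj : Function.Injective f) (z : α)
    (hmap : ∀ x ∈ s, x ≠ z → f x ∈ t) : s.card ≤ t.card + 1 := by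
  have h1 : (s.erase z).card ≤ t.card := by
    apply cardH1 f _ t hinj
    intro x hx
    exact hmap x (Finset.mem_of_mem_erase hx) (Finset.ne_of_mem_erase hx)
  by_cases hz : z ∈ s
  · have := Finset.card_erase_add_one hz; omega
  · rw [Finset.erase_eq_of_notMem hz] at h1; omega

lemma cardH3 (hinj : Function.Injective f) (z y : α) (hy : y ∈ t)
    (hmap : ∀ x ∈ s, x ≠ z → f x ∈ t ∧ f x ≠ y) : s.card ≤ t.card := by
  have h1 : (s.erase z).card ≤ (t.erase y).card := by
    apply cardH1 f _ _ hinj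
    intro x hx
    have h := hmap x (Finset.mem_of_mem_erase hx) (Finset.ne_of_mem_erase hx)
    exact Finset.mem_erase.mpr ⟨h.2, h.1⟩
  have h2 := Finset.card_erase_add_one hy
  by_cases hz : z ∈ s
  · have := Finset.card_erase_add_one hz; omega
  · rw [Finset.erase_eq_of_notMem hz] at h1; omega

end helpers

theorem coreM (n q : ℕ) (C C' τ : Fin n → Fin n)
    (hinj : Function.Injective C)
    (hsort : ∀ (v : ℕ) (h : v + 1 < n), v % 2 ≠ q →
      C ⟨v, by omega⟩ < C ⟨v + 1, h⟩)
    (hinv : ∀ v, τ (τ v) = v)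
    (hC' : ∀ v, C' v = C (τ v))
    (hτ1 : ∀ v : Fin n, (τ v).val = v.val ∨
      ((τ v).val = v.val + 1 ∧ C (τ v) < C v) ∨
      (v.val = (τ v).val + 1 ∧ C v < C (τ v)))
    (hτ2 : ∀ (v : ℕ) (h : v + 1 < n), v % 2 = q →
      C ⟨v + 1, h⟩ < C ⟨v, by omega⟩ → (τ ⟨v, by omega⟩).val = v + 1)
    (t i i' : Fin n) (hi : C i = t) (hi' : C' i' = t) :
    (PhiM n C' t i' = 0 ∨
      PhiM n C' t i' + 1 ≤ PhiM n C t i + (if i < i' then 1 else 0)) ∧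
    (i' < i → 0 < PhiM n C t i) := by
  have hτinj : Function.Injective τ := Function.LeftInverse.injective hinv
  have hτi' : τ i' = i := by
    apply hinj
    rw [← hC' i', hi', hi]
  have hτi : τ i = i' := by rw [← hτi', hinv]
  have hcase : (i'.val = i.val) ∨ (i.val = i'.val + 1 ∧ t < C i') ∨
      (i'.val = i.val + 1 ∧ C i' < t) := by
    rcases hτ1 i' with h | ⟨h1, h2⟩ | ⟨h1, h2⟩
    · left; rw [hτi'] at h; omega
    · right; left
      rw [hτi'] at h1 h2
      exact ⟨h1, hi ▸ h2⟩
    · right; right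
      rw [hτi'] at h1 h2
      exact ⟨h1, hi ▸ h2⟩
  have haux : i' < i → 0 < PhiM n C t i := by
    intro hlt
    rw [Fin.lt_def] at hlt
    rcases hcase with h | ⟨h1, h2⟩ | ⟨h1, h2⟩
    · omega
    · have hmem : i' ∈ prefixSet n C t i := by
        simp only [prefixSet, Finset.mem_filter, Finset.mem_univ, true_and]
        exact ⟨Fin.lt_def.mpr hlt, i', le_refl _, h2⟩
      have h3 : 1 ≤ phiM n C t i' := by
        rw [phiM]
        rw [Nat.succ_le_iff, Finset.card_pos]
        exact ⟨i', Finset.mem_filter.mpr ⟨Finset.mem_univ _, le_refl _, h2⟩⟩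
      have h4 := Finset.le_sup (f := fun j => phiM n C t j + psiM n C t i j) hmem
      rw [PhiM]
      exact lt_of_lt_of_le h3 (le_trans (Nat.le_add_right _ _) h4)
    · omega
  refine ⟨?_, haux⟩
  rcases Finset.eq_empty_or_nonempty (prefixSet n C' t i') with hemp | hne
  · left
    rw [PhiM, hemp, Finset.sup_empty]
    rfl
  · right
    -- key2 : the bound at b-positions
    have key2 : ∀ j' : Fin n, j' < i' → t < C' j' →
        phiM n C' t j' + psiM n C' t i' j' + 1 ≤
          PhiM n C t i + (if i < i' then 1 else 0) := by
      intro j' hj'i hb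
      have hbt : t < C (τ j') := by rw [← hC']; exact hb
      have hi'le : i'.val ≤ i.val + 1 := by
        rcases hcase with h | ⟨h1, _⟩ | ⟨h1, _⟩ <;> omega
      have hCi'lt : i.val < i'.val → C i' < t := by
        intro h
        rcases hcase with hh | ⟨h1, _⟩ | ⟨h1, h2⟩
        · omega
        · omega
        · exact h2
      have hj'ne_i : j' ≠ i := by
        intro he
        have h1 : t < C i' := by rw [← hτi, ← he]; exact hbt
        have h2 : C i' < t := hCi'lt (by rw [← he]; exact Fin.lt_def.mp hj'i)
        exact absurd h1 (not_lt.mpr (le_of_lt h2))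
      have hCj'ne : C j' ≠ t := fun h => hj'ne_i (hinj (h.trans hi.symm))
      have hj'lt_i : j'.val < i.val := by
        have h1 : j'.val < i'.val := Fin.lt_def.mp hj'i
        have h2 : j'.val ≠ i.val := fun h => hj'ne_i (Fin.ext h)
        omega
      have hupper : ∀ x : Fin n, x.val < i'.val → x ≠ i → C (τ x) < t →
          (τ x).val < i.val := by
        intro x hx hxi hct
        have hne_i : (τ x).val ≠ i.val := by
          intro h
          have : τ x = i := Fin.ext h
          rw [this, hi] at hct
          exact lt_irrefl t hct
        have hne_i' : (τ x).val ≠ i'.val := by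
          intro h
          have h2 : τ x = i' := Fin.ext h
          exact hxi (by rw [← hinv x, h2, hτi'])
        have hv := hτ1 x
        rcases hv with h | ⟨h, _⟩ | ⟨h, _⟩ <;> omega
      by_cases hA : t < C j'
      · -- CASE A
        have hj1n : j'.val + 1 < n := by have := i.isLt; omega
        set j1 : Fin n := ⟨j'.val + 1, hj1n⟩ with hj1def
        have hb1 : t < C j1 := by
          by_cases hpar : j'.val % 2 = q
          · by_cases hlt : C j1 < C j'
            · have h5 : (τ ⟨j'.val, by omega⟩).val = j'.val + 1 := hτ2 j'.val hj1n hpar hlt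
              have h6 : τ j' = j1 := by
                apply Fin.ext
                exact h5
              rw [← h6]; exact hbt
            · have hne2 : C j' ≠ C j1 := by
                intro h
                have := hinj h
                rw [Fin.ext_iff] at this
                simp [hj1def] at this
              exact lt_trans hA (lt_of_le_of_ne (not_lt.mp hlt) hne2)
          · exact lt_trans hA (hsort j'.val hj1n hpar)
        have hj1ne_i : j1 ≠ i := by
          intro h
          rw [h, hi] at hb1
          exact lt_irrefl t hb1
        have hj1lt : j1 < i := by
          rw [Fin.lt_def]
          have h2 : j1.val ≠ i.val := fun h => hj1ne_i (Fin.ext h)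
          simp only [hj1def] at h2 ⊢
          omega
        have hj1mem : j1 ∈ prefixSet n C t i := by
          simp only [prefixSet, Finset.mem_filter, Finset.mem_univ, true_and]
          exact ⟨hj1lt, j1, le_refl _, hb1⟩
        have hφ : phiM n C' t j' + 1 ≤ phiM n C t j1 := by
          rw [phiM, phiM]
          have hmap : ∀ x ∈ Finset.univ.filter fun x : Fin n => x ≤ j' ∧ t < C' x,
              τ x ∈ Finset.univ.filter fun x : Fin n => x ≤ j1 ∧ t < C x := by
            intro x hx
            simp only [Finset.mem_filter, Finset.mem_univ, true_and] at hx ⊢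
            refine ⟨?_, by rw [← hC']; exact hx.2⟩
            rw [Fin.le_def] at hx ⊢
            have hv := hτ1 x
            simp only [hj1def]
            rcases hv with h | ⟨h, _⟩ | ⟨h, _⟩ <;> omega
          by_cases hcase2 : τ j' = j1
          · apply cardH2 τ _ _ hτinj hmap j'
            · simp only [Finset.mem_filter, Finset.mem_univ, true_and]
              exact ⟨by rw [Fin.le_def]; simp [hj1def], hA⟩
            · intro x hx hxe
              simp only [Finset.mem_filter, Finset.mem_univ, true_and] at hx
              have : x = τ j' := by rw [← hinv x, hxe]
              rw [hcase2] at this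
              rw [this, Fin.le_def] at hx
              simp only [hj1def] at hx
              omega
          · apply cardH2 τ _ _ hτinj hmap j1
            · simp only [Finset.mem_filter, Finset.mem_univ, true_and]
              exact ⟨le_refl _, hb1⟩
            · intro x hx hxe
              simp only [Finset.mem_filter, Finset.mem_univ, true_and] at hx
              have hx2 : x = τ j1 := by rw [← hinv x, hxe]
              have hj1v : j1.val = j'.val + 1 := rfl
              have hle : x.val ≤ j'.val := Fin.le_def.mp hx.1
              have hvv : x.val = (τ j1).val := congrArg Fin.val hx2
              have hxj' : x = j' := by
                apply Fin.ext
                rcases hτ1 j1 with h | ⟨h, _⟩ | ⟨h, _⟩ <;> omega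
              apply hcase2
              rw [← hxj']
              exact hxe
        have hψ : psiM n C' t i' j' ≤ psiM n C t i j1 + (if i < i' then 1 else 0) := by
          rw [psiM, psiM]
          have hstep : ∀ x : Fin n, (j' < x ∧ x < i' ∧ C' x < t) → x ≠ i →
              (j1 < τ x ∧ τ x < i ∧ C (τ x) < t) := by
            rintro x ⟨hx1, hx2, hx3⟩ hxi
            have hc : C (τ x) < t := by rw [← hC']; exact hx3
            refine ⟨?_, Fin.lt_def.mpr (hupper x (Fin.lt_def.mp hx2) hxi hc), hc⟩
            have hne_j' : (τ x).val ≠ j'.val := by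
              intro h
              rw [show τ x = j' from Fin.ext h] at hc
              exact absurd hc (not_lt.mpr (le_of_lt hA))
            have hne_j1 : (τ x).val ≠ j1.val := by
              intro h
              rw [show τ x = j1 from Fin.ext h] at hc
              exact absurd hc (not_lt.mpr (le_of_lt hb1))
            rw [Fin.lt_def] at hx1 ⊢
            have hv := hτ1 x
            simp only [hj1def] at hne_j1 ⊢
            rcases hv with h | ⟨h, _⟩ | ⟨h, _⟩ <;> omega
          by_cases hii : i < i'
          · rw [if_pos hii]
            apply cardH4 τ _ _ hτinj i
            intro x hx hxi
            simp only [Finset.mem_filter, Finset.mem_univ, true_and] at hx ⊢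
            exact hstep x hx hxi
          · rw [if_neg hii, Nat.add_zero]
            apply cardH1 τ _ _ hτinj
            intro x hx
            simp only [Finset.mem_filter, Finset.mem_univ, true_and] at hx ⊢
            apply hstep x hx
            intro h
            rw [h] at hx
            exact hii (lt_of_le_of_lt (le_of_eq rfl) (lt_of_lt_of_le hx.2.1 (le_refl _)))
        have hsup : phiM n C t j1 + psiM n C t i j1 ≤ PhiM n C t i := by
          rw [PhiM]
          exact Finset.le_sup (f := fun j => phiM n C t j + psiM n C t i j) hj1mem
        omega
      · -- CASE B
        have hCB : C j' < t := lt_of_le_of_ne (not_lt.mp hA) hCj'ne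
        have hτj'ne : τ j' ≠ j' := by
          intro h
          rw [h] at hbt
          exact absurd hbt (not_lt.mpr (le_of_lt hCB))
        have h3 : j'.val = (τ j').val + 1 ∧ C j' < C (τ j') := by
          rcases hτ1 j' with h | ⟨h1, h2⟩ | h
          · exact absurd (Fin.ext h) hτj'ne
          · exact absurd h2 (not_lt.mpr (le_of_lt (lt_trans hCB hbt)))
          · exact h
        set j0 : Fin n := τ j' with hj0def
        have hbj0 : t < C j0 := hbt
        have hj0v : j'.val = j0.val + 1 := h3.1
        have hj0lt : j0 < i := Fin.lt_def.mpr (by omega)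
        have hj0mem : j0 ∈ prefixSet n C t i := by
          simp only [prefixSet, Finset.mem_filter, Finset.mem_univ, true_and]
          exact ⟨hj0lt, j0, le_refl _, hbj0⟩
        have hφ : phiM n C' t j' ≤ phiM n C t j0 := by
          rw [phiM, phiM]
          apply cardH1 τ _ _ hτinj
          intro x hx
          simp only [Finset.mem_filter, Finset.mem_univ, true_and] at hx ⊢
          obtain ⟨hx1, hx2⟩ := hx
          have hc : t < C (τ x) := by rw [← hC']; exact hx2
          refine ⟨?_, hc⟩
          have hne1 : (τ x).val ≠ j'.val := by
            intro h
            rw [show τ x = j' from Fin.ext h] at hc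
            exact absurd hc (not_lt.mpr (le_of_lt hCB))
          have hne2 : (τ x).val ≠ j'.val + 1 := by
            intro h
            have hv2 := hτ1 (τ x)
            rw [hinv x] at hv2
            have hxval : x.val = j'.val := by
              rw [Fin.le_def] at hx1
              rcases hv2 with h2 | ⟨h2, _⟩ | ⟨h2, _⟩ <;> omega
            have hxj : x = j' := Fin.ext hxval
            rw [hxj] at h
            omega
          rw [Fin.le_def] at hx1 ⊢
          have hv := hτ1 x
          rcases hv with h | ⟨h, _⟩ | ⟨h, _⟩ <;> omega
        have hj'tgt : j' ∈ Finset.univ.filter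
            fun x : Fin n => j0 < x ∧ x < i ∧ C x < t := by
          simp only [Finset.mem_filter, Finset.mem_univ, true_and]
          exact ⟨Fin.lt_def.mpr (by omega), Fin.lt_def.mpr hj'lt_i, hCB⟩
        have hψ : psiM n C' t i' j' + 1 ≤
            psiM n C t i j0 + (if i < i' then 1 else 0) := by
          rw [psiM, psiM]
          have hstep : ∀ x : Fin n, (j' < x ∧ x < i' ∧ C' x < t) → x ≠ i →
              (j0 < τ x ∧ τ x < i ∧ C (τ x) < t) ∧ τ x ≠ j' := by
            rintro x ⟨hx1, hx2, hx3⟩ hxi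
            have hc : C (τ x) < t := by rw [← hC']; exact hx3
            have hnej' : τ x ≠ j' := by
              intro h
              have : x = j0 := by rw [← hinv x, h]
              rw [Fin.lt_def] at hx1
              rw [this] at hx1
              omega
            refine ⟨⟨?_, Fin.lt_def.mpr (hupper x (Fin.lt_def.mp hx2) hxi hc), hc⟩, hnej'⟩
            rw [Fin.lt_def] at hx1 ⊢
            have hv := hτ1 x
            rcases hv with h | ⟨h, _⟩ | ⟨h, _⟩ <;> omega
          by_cases hii : i < i'
          · rw [if_pos hii]
            have hc3 := cardH3 τ
              (Finset.univ.filter fun x : Fin n => j' < x ∧ x < i' ∧ C' x < t)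
              (Finset.univ.filter fun x : Fin n => j0 < x ∧ x < i ∧ C x < t)
              hτinj i j' hj'tgt ?_
            · omega
            · intro x hx hxi
              simp only [Finset.mem_filter, Finset.mem_univ, true_and] at hx ⊢
              obtain ⟨h1, h2⟩ := hstep x hx hxi
              exact ⟨h1, h2⟩
          · rw [if_neg hii, Nat.add_zero]
            apply cardH2 τ _ _ hτinj ?_ j' hj'tgt ?_
            · intro x hx
              simp only [Finset.mem_filter, Finset.mem_univ, true_and] at hx ⊢
              have hxi : x ≠ i := by
                intro h
                rw [h] at hx
                exact hii (lt_of_lt_of_le hx.2.1 (le_refl _))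
              exact (hstep x hx hxi).1
            · intro x hx
              simp only [Finset.mem_filter, Finset.mem_univ, true_and] at hx
              have hxi : x ≠ i := by
                intro h
                rw [h] at hx
                exact hii (lt_of_lt_of_le hx.2.1 (le_refl _))
              exact (hstep x hx hxi).2
        have hsup : phiM n C t j0 + psiM n C t i j0 ≤ PhiM n C t i := by
          rw [PhiM]
          exact Finset.le_sup (f := fun j => phiM n C t j + psiM n C t i j) hj0mem
        omega

    -- key : the bound on all prefixes
    have key : ∀ j' ∈ prefixSet n C' t i',
        phiM n C' t j' + psiM n C' t i' j' + 1 ≤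
          PhiM n C t i + (if i < i' then 1 else 0) := by
      intro j' hj'
      simp only [prefixSet, Finset.mem_filter, Finset.mem_univ, true_and] at hj'
      obtain ⟨hj'i, hex⟩ := hj'
      set S : Finset (Fin n) := Finset.univ.filter fun x => x ≤ j' ∧ t < C' x with hS
      have hSne : S.Nonempty := by
        obtain ⟨x, hx1, hx2⟩ := hex
        exact ⟨x, by simp [hS, hx1, hx2]⟩
      set jb : Fin n := S.max' hSne with hjb
      have hjbS : jb ∈ S := S.max'_mem hSne
      have hjble : jb ≤ j' ∧ t < C' jb := by
        have := hjbS; simp [hS] at this; exact this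
      have hphieq : phiM n C' t j' = phiM n C' t jb := by
        rw [phiM, phiM]
        congr 1
        apply Finset.filter_congr
        intro x _
        constructor
        · rintro ⟨h1, h2⟩
          refine ⟨?_, h2⟩
          exact S.le_max' x (by simp [hS, h1, h2])
        · rintro ⟨h1, h2⟩
          exact ⟨le_trans h1 hjble.1, h2⟩
      have hpsile : psiM n C' t i' j' ≤ psiM n C' t i' jb := by
        rw [psiM, psiM]
        apply Finset.card_le_card
        intro x hx
        simp only [Finset.mem_filter, Finset.mem_univ, true_and] at hx ⊢
        exact ⟨lt_of_le_of_lt hjble.1 hx.1, hx.2.1, hx.2.2⟩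
      have := key2 jb (lt_of_le_of_lt hjble.1 hj'i) hjble.2
      omega
    obtain ⟨j0, hj0mem, hsup⟩ := Finset.exists_mem_eq_sup (prefixSet n C' t i') hne
      (fun j => phiM n C' t j + psiM n C' t i' j)
    have := key j0 hj0mem
    rw [PhiM, hsup]
    omega

def revF (n : ℕ) (v : Fin n) : Fin n := ⟨n - 1 - v.val, by have := v.isLt; omega⟩

lemma revF_revF (n : ℕ) (v : Fin n) : revF n (revF n v) = v := by
  apply Fin.ext
  simp only [revF]
  have := v.isLt
  omega

lemma revF_lt (n : ℕ) (a b : Fin n) : revF n a < revF n b ↔ b < a := by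
  rw [Fin.lt_def, Fin.lt_def]
  simp only [revF]
  have := a.isLt; have := b.isLt
  omega

lemma revF_le (n : ℕ) (a b : Fin n) : revF n a ≤ revF n b ↔ b ≤ a := by
  rw [Fin.le_def, Fin.le_def]
  simp only [revF]
  have := a.isLt; have := b.isLt
  omega

def RC (n : ℕ) (C : Fin n → Fin n) : Fin n → Fin n := fun v => revF n (C (revF n v))

lemma RC_inj (n : ℕ) (C : Fin n → Fin n) (h : Function.Injective C) :
    Function.Injective (RC n C) := by
  intro a b hab
  simp only [RC] at hab
  have h1 : ∀ x y : Fin n, revF n x = revF n y → x = y := by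
    intro x y hxy
    rw [← revF_revF n x, hxy, revF_revF]
  have := h1 _ _ hab
  have := h1 _ _ (h this)
  exact this

lemma phiP_eq (n : ℕ) (C : Fin n → Fin n) (t j : Fin n) :
    phiP n C t j = phiM n (RC n C) (revF n t) (revF n j) := by
  rw [phiP, phiM]
  apply Finset.card_nbij' (revF n) (revF n)
  · intro a ha
    simp only [Finset.mem_coe, Finset.mem_filter, Finset.mem_univ, true_and] at ha ⊢
    refine ⟨(revF_le n _ _).mpr ha.1, ?_⟩
    show revF n t < RC n C (revF n a)
    simp only [RC, revF_revF]
    exact (revF_lt n _ _).mpr ha.2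
  · intro a ha
    simp only [Finset.mem_coe, Finset.mem_filter, Finset.mem_univ, true_and] at ha ⊢
    obtain ⟨h1, h2⟩ := ha
    constructor
    · have h5 := (revF_le n (revF n j) a).mpr h1
      rw [revF_revF] at h5; exact h5
    · have h3 : revF n t < revF n (C (revF n a)) := h2
      exact (revF_lt n _ _).mp h3
  · intro a _; exact revF_revF n a
  · intro a _; exact revF_revF n a

lemma psiP_eq (n : ℕ) (C : Fin n → Fin n) (t i j : Fin n) :
    psiP n C t i j = psiM n (RC n C) (revF n t) (revF n i) (revF n j) := by
  rw [psiP, psiM]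
  apply Finset.card_nbij' (revF n) (revF n)
  · intro a ha
    simp only [Finset.mem_coe, Finset.mem_filter, Finset.mem_univ, true_and] at ha ⊢
    refine ⟨(revF_lt n _ _).mpr ha.2.1, (revF_lt n _ _).mpr ha.1, ?_⟩
    show RC n C (revF n a) < revF n t
    simp only [RC, revF_revF]
    exact (revF_lt n _ _).mpr ha.2.2
  · intro a ha
    simp only [Finset.mem_coe, Finset.mem_filter, Finset.mem_univ, true_and] at ha ⊢
    obtain ⟨h1, h2, h3⟩ := ha
    have h4 : revF n (C (revF n a)) < revF n t := h3
    refine ⟨?_, ?_, (revF_lt n _ _).mp h4⟩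
    · have h5 := (revF_lt n (revF n i) a).mpr h2
      rw [revF_revF] at h5; exact h5
    · have h5 := (revF_lt n a (revF n j)).mpr h1
      rw [revF_revF] at h5; exact h5
  · intro a _; exact revF_revF n a
  · intro a _; exact revF_revF n a

lemma prefixSet_eq (n : ℕ) (C : Fin n → Fin n) (t i : Fin n) :
    prefixSet n (RC n C) (revF n t) (revF n i) =
      (suffixSet n C t i).image (revF n) := by
  ext x
  simp only [prefixSet, suffixSet, Finset.mem_filter, Finset.mem_univ, true_and,
    Finset.mem_image]
  constructor
  · rintro ⟨h1, y, hy1, hy2⟩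
    refine ⟨revF n x, ⟨?_, revF n y, ?_, ?_⟩, revF_revF n x⟩
    · have h5 := (revF_lt n (revF n i) x).mpr h1
      rw [revF_revF] at h5; exact h5
    · exact (revF_le n x y).mpr hy1
    · have h2 : revF n t < revF n (C (revF n y)) := hy2
      exact (revF_lt n _ _).mp h2
  · rintro ⟨j, ⟨h1, y, hy1, hy2⟩, rfl⟩
    refine ⟨(revF_lt n _ _).mpr h1, revF n y, (revF_le n _ _).mpr hy1, ?_⟩
    show revF n t < RC n C (revF n y)
    simp only [RC, revF_revF]
    exact (revF_lt n _ _).mpr hy2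

lemma PhiP_eq (n : ℕ) (C : Fin n → Fin n) (t i : Fin n) :
    PhiP n C t i = PhiM n (RC n C) (revF n t) (revF n i) := by
  rw [PhiP, PhiM, prefixSet_eq, Finset.sup_image]
  apply Finset.sup_congr rfl
  intro j _
  show phiP n C t j + psiP n C t i j =
    phiM n (RC n C) (revF n t) (revF n j) + psiM n (RC n C) (revF n t) (revF n i) (revF n j)
  rw [phiP_eq, psiP_eq]


set_option maxHeartbeats 1600000 in
/-- suppose `C_k` is obtained from some configuration by a greedy step of
parity `p` (odd step for `p = 0`, even step for `p = 1`) and `C_{k+1}` is the greedy step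
of the opposite parity `1 - p` applied to `C_k`.  Then for every token `t` with
`Φ_{C_k}(t) > 0` one has `Φ_{C_{k+1}}(t) ≤ Φ_{C_k}(t) - 1`.  (Here `i_k` and `i_{k+1}`
are the positions of `t` in `C_k` and `C_{k+1}`.) -/
theorem stmt_12 (n p : ℕ) (hp : p < 2) (D : Fin n ≃ Fin n)
    (Ck Ck1 : Fin n → Fin n)
    (hCk : Ck = greedyStep n p ⇑D) (hCk1 : Ck1 = greedyStep n (1 - p) Ck)
    (t ik ik1 : Fin n) (hik : Ck ik = t) (hik1 : Ck1 ik1 = t)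
    (hpos : 0 < Phi n Ck t ik) :
    Phi n Ck1 t ik1 + 1 ≤ Phi n Ck t ik := by
  have hq : 1 - p < 2 := by omega
  have hDinj : Function.Injective ⇑D := D.injective
  have hCkinj : Function.Injective Ck := by
    rw [hCk]; exact greedyStep_injective n p hp ⇑D hDinj
  have hsortCk : ∀ (v : ℕ) (h : v + 1 < n), v % 2 ≠ 1 - p →
      Ck ⟨v, by omega⟩ < Ck ⟨v + 1, h⟩ := by
    intro v h hv
    have hvp : v % 2 = p := by omega
    rw [hCk]
    exact greedyStep_sorted n p hp ⇑D hDinj v h hvp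
  obtain ⟨τ, hinv, hC', hτ1, hτ2⟩ :
      ∃ τ : Fin n → Fin n, (∀ v, τ (τ v) = v) ∧ (∀ v, Ck1 v = Ck (τ v)) ∧
        (∀ v : Fin n, (τ v).val = v.val ∨
          ((τ v).val = v.val + 1 ∧ Ck (τ v) < Ck v) ∨
          (v.val = (τ v).val + 1 ∧ Ck v < Ck (τ v))) ∧
        (∀ (v : ℕ) (h : v + 1 < n), v % 2 = 1 - p →
          Ck ⟨v + 1, h⟩ < Ck ⟨v, by omega⟩ → (τ ⟨v, by omega⟩).val = v + 1) :=
    ⟨stepMatch n (1 - p) Ck, stepMatch_invol n (1 - p) hq Ck,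
      fun v => by rw [hCk1]; exact greedyStep_eq_comp n (1 - p) Ck v,
      stepMatch_cases n (1 - p) Ck, stepMatch_swap n (1 - p) Ck⟩
  -- M-side
  obtain ⟨hMdisj, hMaux⟩ := coreM n (1 - p) Ck Ck1 τ hCkinj hsortCk hinv hC' hτ1 hτ2
    t ik ik1 hik hik1
  -- P-side via reversal
  have hRinj : Function.Injective (RC n Ck) := RC_inj n Ck hCkinj
  have hRsort : ∀ (v : ℕ) (h : v + 1 < n), v % 2 ≠ (n + p + 1) % 2 →
      RC n Ck ⟨v, by omega⟩ < RC n Ck ⟨v + 1, h⟩ := by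
    intro v h hv
    show revF n (Ck (revF n ⟨v, by omega⟩)) < revF n (Ck (revF n ⟨v + 1, h⟩))
    rw [revF_lt]
    have e1 : revF n (⟨v, by omega⟩ : Fin n) = ⟨n - 1 - v, by omega⟩ := rfl
    have e2 : revF n (⟨v + 1, h⟩ : Fin n) = ⟨n - 2 - v, by omega⟩ := by
      apply Fin.ext; simp only [revF]; omega
    rw [e1, e2]
    have h3 : (n - 2 - v) + 1 < n := by omega
    have h4 : (n - 2 - v) % 2 ≠ 1 - p := by omega
    have := hsortCk (n - 2 - v) h3 h4
    have e3 : (⟨(n - 2 - v) + 1, h3⟩ : Fin n) = ⟨n - 1 - v, by omega⟩ := by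
      apply Fin.ext; simp only []; omega
    rw [e3] at this
    exact this
  set τR : Fin n → Fin n := fun v => revF n (τ (revF n v)) with hτRdef
  have hRinv : ∀ v, τR (τR v) = v := by
    intro v
    show revF n (τ (revF n (revF n (τ (revF n v))))) = v
    rw [revF_revF, hinv, revF_revF]
  have hRC' : ∀ v, RC n Ck1 v = RC n Ck (τR v) := by
    intro v
    show revF n (Ck1 (revF n v)) = revF n (Ck (revF n (revF n (τ (revF n v)))))
    rw [revF_revF, hC']
  have hRτ1 : ∀ v : Fin n, (τR v).val = v.val ∨
      ((τR v).val = v.val + 1 ∧ RC n Ck (τR v) < RC n Ck v) ∨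
      (v.val = (τR v).val + 1 ∧ RC n Ck v < RC n Ck (τR v)) := by
    intro v
    have hu := v.isLt
    have huu := (τ (revF n v)).isLt
    have hvv : (revF n v).val = n - 1 - v.val := rfl
    have hτRv : (τR v).val = n - 1 - (τ (revF n v)).val := rfl
    have hCv : RC n Ck v = revF n (Ck (revF n v)) := rfl
    have hCτR : RC n Ck (τR v) = revF n (Ck (τ (revF n v))) := by
      show revF n (Ck (revF n (revF n (τ (revF n v))))) = _
      rw [revF_revF]
    rcases hτ1 (revF n v) with h | ⟨h, h2⟩ | ⟨h, h2⟩
    · left; omega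
    · right; right
      refine ⟨by omega, ?_⟩
      rw [hCv, hCτR, revF_lt]
      exact h2
    · right; left
      refine ⟨by omega, ?_⟩
      rw [hCv, hCτR, revF_lt]
      exact h2
  have hRτ2 : ∀ (v : ℕ) (h : v + 1 < n), v % 2 = (n + p + 1) % 2 →
      RC n Ck ⟨v + 1, h⟩ < RC n Ck ⟨v, by omega⟩ → (τR ⟨v, by omega⟩).val = v + 1 := by
    intro v h hv hlt
    have h3 : (n - 2 - v) + 1 < n := by omega
    have h4 : (n - 2 - v) % 2 = 1 - p := by omega
    have hlt2 : Ck ⟨(n - 2 - v) + 1, h3⟩ < Ck ⟨n - 2 - v, by omega⟩ := by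
      have h5 : revF n (Ck (revF n (⟨v + 1, h⟩ : Fin n))) <
          revF n (Ck (revF n (⟨v, by omega⟩ : Fin n))) := hlt
      rw [revF_lt] at h5
      have e1 : revF n (⟨v, by omega⟩ : Fin n) = ⟨(n - 2 - v) + 1, h3⟩ := by
        apply Fin.ext; simp only [revF]; omega
      have e2 : revF n (⟨v + 1, h⟩ : Fin n) = ⟨n - 2 - v, by omega⟩ := by
        apply Fin.ext; simp only [revF]; omega
      rw [e1, e2] at h5
      exact h5
    have h6 := hτ2 (n - 2 - v) h3 h4 hlt2
    have h7 : τ ⟨n - 2 - v, by omega⟩ = ⟨(n - 2 - v) + 1, h3⟩ := Fin.ext h6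
    have h8 : τ ⟨(n - 2 - v) + 1, h3⟩ = ⟨n - 2 - v, by omega⟩ := by
      have h9 := congrArg τ h7
      rw [hinv] at h9
      exact h9.symm
    show (revF n (τ (revF n ⟨v, by omega⟩))).val = v + 1
    have e3 : revF n (⟨v, by omega⟩ : Fin n) = ⟨(n - 2 - v) + 1, h3⟩ := by
      apply Fin.ext; simp only [revF]; omega
    rw [e3, h8]
    show n - 1 - (n - 2 - v) = v + 1
    omega
  have hRik : RC n Ck (revF n ik) = revF n t := by
    show revF n (Ck (revF n (revF n ik))) = revF n t
    rw [revF_revF, hik]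
  have hRik1 : RC n Ck1 (revF n ik1) = revF n t := by
    show revF n (Ck1 (revF n (revF n ik1))) = revF n t
    rw [revF_revF, hik1]
  obtain ⟨hPdisj, hPaux⟩ := coreM n ((n + p + 1) % 2) (RC n Ck) (RC n Ck1) τR
    hRinj hRsort hRinv hRC' hRτ1 hRτ2 (revF n t) (revF n ik) (revF n ik1) hRik hRik1
  rw [← PhiP_eq, ← PhiP_eq] at hPdisj
  rw [← PhiP_eq] at hPaux
  have hcond : (revF n ik < revF n ik1) = (ik1 < ik) := propext (revF_lt n ik ik1)
  simp only [hcond] at hPdisj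
  have hPaux' : ik < ik1 → 0 < PhiP n Ck t ik := by
    intro h; exact hPaux ((revF_lt n ik1 ik).mpr h)
  unfold Phi at hpos ⊢
  rcases lt_trichotomy ik ik1 with h | h | h
  · rw [if_pos h] at hMdisj
    rw [if_neg (lt_asymm h)] at hPdisj
    have hB := hPaux' h
    rcases hMdisj with h1 | h1 <;> rcases hPdisj with h2 | h2 <;> omega
  · rw [if_neg (by rw [h]; exact lt_irrefl ik1)] at hMdisj
    rw [if_neg (by rw [h]; exact lt_irrefl ik1)] at hPdisj
    rcases hMdisj with h1 | h1 <;> rcases hPdisj with h2 | h2 <;> omega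
  · rw [if_neg (lt_asymm h)] at hMdisj
    rw [if_pos h] at hPdisj
    have hA := hMaux h
    rcases hMdisj with h1 | h1 <;> rcases hPdisj with h2 | h2 <;> omega
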